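/- Let T, n ∈ ℕ with n ≥ 1, and suppose reals r₁,...,r_T ∈ [1,n] satisfy: for every nonnegative non-increasing g ∈ ℝⁿ, Σ_{t=1}^T r_t · g_{⌈r_t⌉} ≤ C·T·‖g‖₂. Then for any exponent θ ∈ (1/2, 1], Σ_{t=1}^T r_t^θ ≤ C'·T·n^{θ - 1/2}, where C' depends only on C and θ. -/

import Mathlib

open Finset

lemma rpow_diff_lower {s x : ℝ} (hs0 : 0 < s) (hs1 : s ≤ 1) (hx : 1 ≤ x) :
    s * x ^ (s - 1) ≤ x ^ s - (x - 1) ^ s := by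
  have hx0 : 0 < x := lt_of_lt_of_le one_pos hx
  have hu : -1 ≤ -(1 / x) := by
    rw [neg_le_neg_iff]
    exact div_le_one_of_le₀ hx hx0.le
  have hb := rpow_one_add_le_one_add_mul_self hu hs0.le hs1
  -- (1 - 1/x)^s ≤ 1 - s/x
  have h1 : (1 + -(1/x)) = (x - 1) / x := by field_simp; ring
  rw [h1] at hb
  have hxs : 0 < x ^ s := Real.rpow_pos_of_pos hx0 s
  have hdiv : ((x - 1) / x) ^ s = (x - 1) ^ s / x ^ s := by
    rw [Real.div_rpow (by linarith) hx0.le]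
  rw [hdiv] at hb
  have hb' : (x - 1) ^ s ≤ (1 + s * -(1/x)) * x ^ s := by
    rw [div_le_iff₀ hxs] at hb; linarith [hb]
  have hpow : x ^ s * (1 / x) = x ^ (s - 1) := by
    rw [one_div, ← Real.rpow_neg_one x, ← Real.rpow_add hx0]
    ring_nf
  nlinarith [hb', hpow]

lemma sum_rpow_sub_one_le {s : ℝ} (hs0 : 0 < s) (hs1 : s ≤ 1) (n : ℕ) :
    ∑ i ∈ Finset.Icc 1 n, ((i : ℝ)) ^ (s - 1) ≤ (n : ℝ) ^ s / s := by
  have key : ∀ i ∈ Finset.Icc 1 n, (i : ℝ) ^ (s - 1) ≤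
      (((i : ℝ)) ^ s - ((i - 1 : ℕ) : ℝ) ^ s) / s := by
    intro i hi
    have hi1 : 1 ≤ i := (Finset.mem_Icc.mp hi).1
    have hx : (1 : ℝ) ≤ (i : ℝ) := by exact_mod_cast hi1
    have hcast : ((i - 1 : ℕ) : ℝ) = (i : ℝ) - 1 := by
      have := Nat.cast_sub hi1 (R := ℝ); simpa using this
    rw [hcast, le_div_iff₀ hs0, mul_comm]
    exact rpow_diff_lower hs0 hs1 hx
  calc ∑ i ∈ Finset.Icc 1 n, ((i : ℝ)) ^ (s - 1)
      ≤ ∑ i ∈ Finset.Icc 1 n, (((i : ℝ)) ^ s - ((i - 1 : ℕ) : ℝ) ^ s) / s :=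
        Finset.sum_le_sum key
    _ = (∑ i ∈ Finset.Icc 1 n, (((i : ℝ)) ^ s - ((i - 1 : ℕ) : ℝ) ^ s)) / s := by
        rw [Finset.sum_div]
    _ ≤ (n : ℝ) ^ s / s := by
        gcongr
        have htel : ∑ i ∈ Finset.Icc 1 n, (((i : ℝ)) ^ s - ((i - 1 : ℕ) : ℝ) ^ s)
            = ((n : ℕ) : ℝ) ^ s - ((0 : ℕ) : ℝ) ^ s := by
          rw [← Finset.Ico_add_one_right_eq_Icc, Finset.sum_Ico_eq_sum_range]
          simp only [Nat.add_sub_cancel, Nat.succ_sub_one]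
          have : ∀ i, ((1 + i : ℕ) : ℝ) ^ s - ((1 + i - 1 : ℕ) : ℝ) ^ s
              = (fun k : ℕ => ((k : ℕ) : ℝ) ^ s) (i + 1) - (fun k : ℕ => ((k : ℕ) : ℝ) ^ s) i := by
            intro i; simp [Nat.add_sub_cancel_left, Nat.add_comm]
          rw [Finset.sum_congr rfl (fun i _ => this i)]
          exact Finset.sum_range_sub (fun k : ℕ => ((k : ℕ) : ℝ) ^ s) n
        rw [htel]
        simp [Real.zero_rpow hs0.ne']

theorem amortized_rank_sum (C θ : ℝ) (hθ1 : 1 / 2 < θ) (hθ2 : θ ≤ 1) :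
    ∃ C' : ℝ, ∀ (T n : ℕ) (r : Fin T → ℝ),
      1 ≤ n →
      (∀ t, 1 ≤ r t ∧ r t ≤ (n : ℝ)) →
      (∀ g : ℕ → ℝ, (∀ i, 0 ≤ g i) → (∀ i j : ℕ, i ≤ j → g j ≤ g i) →
        ∑ t, r t * g ⌈r t⌉₊ ≤
          C * T * Real.sqrt (∑ i ∈ Finset.Icc 1 n, g i ^ 2)) →
      ∑ t, r t ^ θ ≤ C' * T * (n : ℝ) ^ (θ - 1 / 2) := by
  set s : ℝ := 2 * θ - 1 with hs_def
  have hs0 : 0 < s := by simp only [hs_def]; linarith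
  have hs1 : s ≤ 1 := by simp only [hs_def]; linarith
  refine ⟨2 * |C| / Real.sqrt s, ?_⟩
  intro T n r hn hr hg
  set g : ℕ → ℝ := fun i => ((max i 1 : ℕ) : ℝ) ^ (θ - 1) with hg_def
  have hθn : θ - 1 ≤ 0 := by linarith
  have h0 : ∀ i, 0 ≤ g i := fun i => Real.rpow_nonneg (Nat.cast_nonneg _) _
  have hmono : ∀ i j : ℕ, i ≤ j → g j ≤ g i := by
    intro i j hij
    apply Real.rpow_le_rpow_of_nonpos
    · exact_mod_cast Nat.lt_of_lt_of_le Nat.zero_lt_one (le_max_right i 1)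
    · exact_mod_cast max_le_max hij le_rfl
    · exact hθn
  have hsum := hg g h0 hmono
  -- pointwise lower bound
  have hA : ∀ t, r t ^ θ ≤ 2 * (r t * g ⌈r t⌉₊) := by
    intro t
    obtain ⟨hr1, _⟩ := hr t
    have hrpos : (0 : ℝ) < r t := by linarith
    set m : ℕ := ⌈r t⌉₊ with hm_def
    have hm1 : 1 ≤ m := Nat.one_le_ceil_iff.mpr hrpos
    have hgm : g m = ((m : ℕ) : ℝ) ^ (θ - 1) := by
      simp only [hg_def, max_eq_left hm1]
    have hm2 : ((m : ℕ) : ℝ) ≤ 2 * r t := by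
      have := Nat.ceil_lt_add_one (le_of_lt hrpos) (R := ℝ)
      simp only [hm_def]; linarith
    have hmpos : (0 : ℝ) < ((m : ℕ) : ℝ) := by exact_mod_cast hm1
    have key : (2 * r t) ^ (θ - 1) ≤ ((m : ℕ) : ℝ) ^ (θ - 1) :=
      Real.rpow_le_rpow_of_nonpos hmpos hm2 hθn
    have hmulr : (2 * r t) ^ (θ - 1) = (2:ℝ) ^ (θ - 1) * r t ^ (θ - 1) :=
      Real.mul_rpow (by norm_num) hrpos.le
    have h2 : (1 / 2 : ℝ) ≤ (2:ℝ) ^ (θ - 1) := by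
      have := Real.rpow_le_rpow_of_exponent_le (x := 2) (by norm_num) (by linarith : (-1:ℝ) ≤ θ - 1)
      rw [Real.rpow_neg_one] at this
      linarith [this]
    have hrθ : r t ^ θ = r t * r t ^ (θ - 1) := by
      nth_rewrite 1 [show θ = 1 + (θ - 1) by ring]
      rw [Real.rpow_add hrpos, Real.rpow_one]
    have hrpow : 0 ≤ r t ^ (θ - 1) := Real.rpow_nonneg hrpos.le _
    rw [hrθ, hgm]
    nlinarith [key, mul_le_mul_of_nonneg_right h2 hrpow]
  -- bound the square sum
  have hS : ∑ i ∈ Finset.Icc 1 n, g i ^ 2 ≤ (n : ℝ) ^ s / s := by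
    refine le_trans (Finset.sum_le_sum ?_) (sum_rpow_sub_one_le hs0 hs1 n)
    intro i hi
    have hi1 : 1 ≤ i := (Finset.mem_Icc.mp hi).1
    have hipos : (0 : ℝ) < (i : ℝ) := by exact_mod_cast hi1
    have : g i = ((i : ℕ) : ℝ) ^ (θ - 1) := by
      simp only [hg_def, max_eq_left hi1]
    rw [this, sq, ← Real.rpow_add hipos, show θ - 1 + (θ - 1) = s - 1 by rw [hs_def]; ring]
  have hSnn : 0 ≤ ∑ i ∈ Finset.Icc 1 n, g i ^ 2 := Finset.sum_nonneg fun i _ => sq_nonneg _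
  have hsqrt : Real.sqrt (∑ i ∈ Finset.Icc 1 n, g i ^ 2)
      ≤ (n : ℝ) ^ (θ - 1 / 2) / Real.sqrt s := by
    refine le_trans (Real.sqrt_le_sqrt hS) ?_
    rw [Real.sqrt_div (Real.rpow_nonneg (Nat.cast_nonneg n) s) s,
      Real.sqrt_eq_rpow ((n : ℝ) ^ s), ← Real.rpow_mul (Nat.cast_nonneg n),
      show s * (1 / 2) = θ - 1 / 2 by rw [hs_def]; ring]
  -- final chain
  have hsqrtnn : 0 ≤ Real.sqrt (∑ i ∈ Finset.Icc 1 n, g i ^ 2) := Real.sqrt_nonneg _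
  have hTnn : (0 : ℝ) ≤ (T : ℝ) := Nat.cast_nonneg _
  calc ∑ t, r t ^ θ ≤ ∑ t, 2 * (r t * g ⌈r t⌉₊) := Finset.sum_le_sum fun t _ => hA t
    _ = 2 * ∑ t, r t * g ⌈r t⌉₊ := by rw [Finset.mul_sum]
    _ ≤ 2 * (C * T * Real.sqrt (∑ i ∈ Finset.Icc 1 n, g i ^ 2)) := by linarith [hsum]
    _ ≤ 2 * (|C| * T * Real.sqrt (∑ i ∈ Finset.Icc 1 n, g i ^ 2)) := by
        have : C * T * Real.sqrt (∑ i ∈ Finset.Icc 1 n, g i ^ 2)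
            ≤ |C| * T * Real.sqrt (∑ i ∈ Finset.Icc 1 n, g i ^ 2) := by
          apply mul_le_mul_of_nonneg_right _ hsqrtnn
          exact mul_le_mul_of_nonneg_right (le_abs_self C) hTnn
        linarith
    _ ≤ 2 * (|C| * T * ((n : ℝ) ^ (θ - 1 / 2) / Real.sqrt s)) := by
        have h1 : 0 ≤ |C| * T := mul_nonneg (abs_nonneg C) hTnn
        have := mul_le_mul_of_nonneg_left hsqrt h1
        linarith
    _ = 2 * |C| / Real.sqrt s * T * (n : ℝ) ^ (θ - 1 / 2) := by ring
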